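/- Fix ρ > 0 and χ > 0. Define K = {(m, U) ∈ ℝⁿ × Sym₀ⁿ : U = (m⊗m)/ρ − (|m|²/(nρ))Iₙ and |m|² = ρχ}. Then the convex hull of K equals the set {(m, U) : λ_max((m⊗m)/ρ − U) ≤ χ/n}, and K equals the intersection of this convex hull with {(m, U) : |m|² = ρχ}. -/

import Mathlib

open Matrix

noncomputable def lambdaMax {n : ℕ} (S : Matrix (Fin n) (Fin n) ℝ) : ℝ :=
  sSup {r : ℝ | ∃ v : Fin n → ℝ, (∑ i, v i ^ 2) = 1 ∧ r = v ⬝ᵥ S.mulVec v}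

namespace Stmt4Aux

variable {n : ℕ}

abbrev Pt (n : ℕ) := (Fin n → ℝ) × Matrix (Fin n) (Fin n) ℝ

lemma dot_mulVec_eq (M : Matrix (Fin n) (Fin n) ℝ) (v : Fin n → ℝ) :
    v ⬝ᵥ M.mulVec v = ∑ i, ∑ j, v i * M i j * v j := by
  simp [dotProduct, mulVec, Finset.mul_sum, mul_assoc]

lemma quad_bdd (A : Matrix (Fin n) (Fin n) ℝ) :
    BddAbove {r : ℝ | ∃ v : Fin n → ℝ, (∑ i, v i ^ 2) = 1 ∧ r = v ⬝ᵥ A.mulVec v} := by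
  refine ⟨∑ i, ∑ j, |A i j|, ?_⟩
  rintro r ⟨v, hv, rfl⟩
  have habs : ∀ i, |v i| ≤ 1 := by
    intro i
    have h1 : v i ^ 2 ≤ 1 := by
      rw [← hv]
      exact Finset.single_le_sum (f := fun i => v i ^ 2) (fun j _ => sq_nonneg _)
        (Finset.mem_univ i)
    nlinarith [abs_nonneg (v i), sq_abs (v i)]
  rw [dot_mulVec_eq]
  refine Finset.sum_le_sum fun i _ => Finset.sum_le_sum fun j _ => ?_
  calc v i * A i j * v j ≤ |v i * A i j * v j| := le_abs_self _
    _ = |v i| * |A i j| * |v j| := by rw [abs_mul, abs_mul]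
    _ ≤ 1 * |A i j| * 1 :=
        mul_le_mul (mul_le_mul_of_nonneg_right (habs i) (abs_nonneg _)) (habs j)
          (abs_nonneg _) (by positivity)
    _ = |A i j| := by ring

lemma lambdaMax_le_iff {A : Matrix (Fin n) (Fin n) ℝ} {t : ℝ} (ht : 0 ≤ t) :
    lambdaMax A ≤ t ↔ ∀ v : Fin n → ℝ, v ⬝ᵥ A.mulVec v ≤ t * ∑ i, v i ^ 2 := by
  constructor
  · intro h v
    rcases eq_or_ne v 0 with rfl | hv
    · simp [dotProduct]
    · have hsum : 0 < ∑ i, v i ^ 2 := by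
        obtain ⟨i, hi⟩ := Function.ne_iff.mp hv
        exact Finset.sum_pos' (fun j _ => sq_nonneg _) ⟨i, Finset.mem_univ i, pow_two_pos_of_ne_zero hi⟩
      set c := Real.sqrt (∑ i, v i ^ 2) with hcdef
      have hc : 0 < c := Real.sqrt_pos.mpr hsum
      have hc2 : c ^ 2 = ∑ i, v i ^ 2 := Real.sq_sqrt hsum.le
      have hmem : (c⁻¹ • v) ⬝ᵥ A.mulVec (c⁻¹ • v) ∈
          {r : ℝ | ∃ w : Fin n → ℝ, (∑ i, w i ^ 2) = 1 ∧ r = w ⬝ᵥ A.mulVec w} := by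
        refine ⟨c⁻¹ • v, ?_, rfl⟩
        have : ∑ i, (c⁻¹ • v) i ^ 2 = c⁻¹ ^ 2 * ∑ i, v i ^ 2 := by
          rw [Finset.mul_sum]
          exact Finset.sum_congr rfl fun i _ => by simp [mul_pow]
        rw [this, ← hc2]
        field_simp
      have hle : (c⁻¹ • v) ⬝ᵥ A.mulVec (c⁻¹ • v) ≤ t := le_trans (le_csSup (quad_bdd A) hmem) h
      have hq : (c⁻¹ • v) ⬝ᵥ A.mulVec (c⁻¹ • v) = c⁻¹ ^ 2 * (v ⬝ᵥ A.mulVec v) := by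
        rw [dot_mulVec_eq, dot_mulVec_eq, Finset.mul_sum]
        refine Finset.sum_congr rfl fun i _ => ?_
        rw [Finset.mul_sum]
        refine Finset.sum_congr rfl fun j _ => by simp [smul_eq_mul]; ring
      rw [hq] at hle
      have hcne : c ≠ 0 := hc.ne'
      have : v ⬝ᵥ A.mulVec v = c ^ 2 * (c⁻¹ ^ 2 * (v ⬝ᵥ A.mulVec v)) := by
        field_simp
      rw [this, ← hc2] at *
      calc c ^ 2 * (c⁻¹ ^ 2 * (v ⬝ᵥ A.mulVec v)) ≤ c ^ 2 * t := by
            have := sq_nonneg c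
            exact mul_le_mul_of_nonneg_left hle (by positivity)
        _ = t * c ^ 2 := by ring
  · intro h
    refine Real.sSup_le ?_ ht
    rintro r ⟨v, hv, rfl⟩
    simpa [hv] using h v

section Main

variable (ρ χ : ℝ)

/-- The matrix `A` associated to a point. -/
noncomputable def Amat (p : Pt n) : Matrix (Fin n) (Fin n) ℝ :=
  ρ⁻¹ • vecMulVec p.1 p.1 - p.2

/-- The defect matrix. -/
noncomputable def Bmat (p : Pt n) : Matrix (Fin n) (Fin n) ℝ :=
  (χ / n) • (1 : Matrix (Fin n) (Fin n) ℝ) - Amat ρ p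

lemma quad_vecMulVec (m v : Fin n → ℝ) :
    v ⬝ᵥ (vecMulVec m m).mulVec v = (m ⬝ᵥ v) ^ 2 := by
  rw [dot_mulVec_eq, sq, dotProduct, Finset.sum_mul_sum]
  exact Finset.sum_congr rfl fun i _ => Finset.sum_congr rfl fun j _ => by
    rw [vecMulVec_apply]; ring

lemma quad_smul_one (c : ℝ) (v : Fin n → ℝ) :
    v ⬝ᵥ ((c • (1 : Matrix (Fin n) (Fin n) ℝ)).mulVec v) = c * ∑ i, v i ^ 2 := by
  rw [Matrix.smul_mulVec, Matrix.one_mulVec, dotProduct_smul, smul_eq_mul]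
  congr 1
  simp [dotProduct, sq]

lemma quad_Amat (p : Pt n) (v : Fin n → ℝ) :
    v ⬝ᵥ (Amat ρ p).mulVec v = ρ⁻¹ * (p.1 ⬝ᵥ v) ^ 2 - v ⬝ᵥ p.2.mulVec v := by
  rw [Amat, Matrix.sub_mulVec, dotProduct_sub, Matrix.smul_mulVec, dotProduct_smul,
    smul_eq_mul, quad_vecMulVec]

lemma quad_Bmat (p : Pt n) (v : Fin n → ℝ) :
    v ⬝ᵥ (Bmat ρ χ p).mulVec v
      = χ / n * ∑ i, v i ^ 2 - (ρ⁻¹ * (p.1 ⬝ᵥ v) ^ 2 - v ⬝ᵥ p.2.mulVec v) := by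
  rw [Bmat, Matrix.sub_mulVec, dotProduct_sub, quad_smul_one, quad_Amat]

lemma trace_vecMulVec (m : Fin n → ℝ) :
    (vecMulVec m m).trace = ∑ i, m i ^ 2 := by
  simp [Matrix.trace, Matrix.diag, vecMulVec_apply, sq]

lemma trace_smul_one (hn : 0 < n) (c : ℝ) :
    (c • (1 : Matrix (Fin n) (Fin n) ℝ)).trace = c * n := by
  rw [Matrix.trace_smul, Matrix.trace_one, smul_eq_mul]
  simp

lemma trace_Amat (p : Pt n) :
    (Amat ρ p).trace = ρ⁻¹ * ∑ i, p.1 i ^ 2 - p.2.trace := by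
  rw [Amat, Matrix.trace_sub, Matrix.trace_smul, trace_vecMulVec, smul_eq_mul]

lemma symm_dot {B : Matrix (Fin n) (Fin n) ℝ} (hB : B.IsSymm) (e x : Fin n → ℝ) :
    e ⬝ᵥ B.mulVec x = B.mulVec e ⬝ᵥ x := by
  rw [dotProduct_mulVec]
  congr 1
  rw [← vecMul_transpose, hB.eq]

lemma vecMulVec_mulVec' (a b x : Fin n → ℝ) :
    (vecMulVec a b).mulVec x = (b ⬝ᵥ x) • a := by
  funext i
  simp only [mulVec, dotProduct, vecMulVec_apply, Pi.smul_apply, smul_eq_mul]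
  rw [Finset.sum_mul]
  exact Finset.sum_congr rfl fun j _ => by ring

lemma dot_self_eq_sum_sq (e : Fin n → ℝ) : e ⬝ᵥ e = ∑ i, e i ^ 2 := by
  simp [dotProduct, sq]

/-- A symmetric PSD matrix dominates `μ (e ⬝ᵥ v)²` when `e` is a unit `μ`-eigenvector. -/
lemma eigen_lower {B : Matrix (Fin n) (Fin n) ℝ} (hB : B.IsSymm)
    (hpsd : ∀ v, 0 ≤ v ⬝ᵥ B.mulVec v) {e : Fin n → ℝ} {μ : ℝ}
    (hee : (∑ i, e i ^ 2) = 1) (he : B.mulVec e = μ • e) (v : Fin n → ℝ) :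
    μ * (e ⬝ᵥ v) ^ 2 ≤ v ⬝ᵥ B.mulVec v := by
  set c := e ⬝ᵥ v with hc
  have h0 : 0 ≤ (v - c • e) ⬝ᵥ B.mulVec (v - c • e) := hpsd _
  have hBv : B.mulVec (v - c • e) = B.mulVec v - c • (μ • e) := by
    rw [Matrix.mulVec_sub, Matrix.mulVec_smul, he]
  have h1 : e ⬝ᵥ B.mulVec v = μ * c := by
    rw [symm_dot hB, he, smul_dotProduct, smul_eq_mul, hc]
  have h2 : v ⬝ᵥ (μ • e) = μ * c := by
    rw [dotProduct_smul, smul_eq_mul, dotProduct_comm, hc]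
  have h3 : e ⬝ᵥ e = 1 := by rw [dot_self_eq_sum_sq, hee]
  have hve : v ⬝ᵥ e = c := by rw [dotProduct_comm, hc]
  have hexp : (v - c • e) ⬝ᵥ B.mulVec (v - c • e)
      = v ⬝ᵥ B.mulVec v - μ * c ^ 2 := by
    simp only [hBv, dotProduct_sub, sub_dotProduct, smul_dotProduct, dotProduct_smul, smul_eq_mul]
    rw [h1, h3, hve]
    ring
  rw [hexp] at h0
  linarith

lemma exists_unit_eigen {B : Matrix (Fin n) (Fin n) ℝ} (hB : B.IsSymm)
    (hpsd : ∀ v, 0 ≤ v ⬝ᵥ B.mulVec v) (hne : B ≠ 0) :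
    ∃ (e : Fin n → ℝ) (μ : ℝ), 0 < μ ∧ (∑ i, e i ^ 2) = 1 ∧ B.mulVec e = μ • e := by
  have hherm : B.IsHermitian := (conjTranspose_eq_transpose_of_trivial B).trans hB
  obtain ⟨v, t, ht, hv, hBv⟩ := hherm.exists_eigenvector_of_ne_zero hne
  have hsum : 0 < ∑ i, v i ^ 2 := by
    obtain ⟨i, hi⟩ := Function.ne_iff.mp hv
    exact Finset.sum_pos' (fun j _ => sq_nonneg _) ⟨i, Finset.mem_univ i, pow_two_pos_of_ne_zero hi⟩
  have hquad : v ⬝ᵥ B.mulVec v = t * ∑ i, v i ^ 2 := by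
    rw [hBv, dotProduct_smul, smul_eq_mul, dot_self_eq_sum_sq]
  have htpos : 0 < t := by
    rcases lt_trichotomy t 0 with h | h | h
    · exfalso
      have := hpsd v
      rw [hquad] at this
      nlinarith
    · exact absurd h ht
    · exact h
  set c := Real.sqrt (∑ i, v i ^ 2) with hcdef
  have hc : 0 < c := Real.sqrt_pos.mpr hsum
  have hc2 : c ^ 2 = ∑ i, v i ^ 2 := Real.sq_sqrt hsum.le
  refine ⟨c⁻¹ • v, t, htpos, ?_, ?_⟩
  · have : ∑ i, (c⁻¹ • v) i ^ 2 = c⁻¹ ^ 2 * ∑ i, v i ^ 2 := by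
      rw [Finset.mul_sum]
      exact Finset.sum_congr rfl fun i _ => by simp [mul_pow]
    rw [this, ← hc2]
    field_simp
  · rw [Matrix.mulVec_smul, hBv, smul_comm]

lemma ker_lt {B : Matrix (Fin n) (Fin n) ℝ} (hB : B.IsSymm) {e : Fin n → ℝ} {μ : ℝ}
    (hμ : μ ≠ 0) (hee : (∑ i, e i ^ 2) = 1) (he : B.mulVec e = μ • e) :
    LinearMap.ker B.mulVecLin < LinearMap.ker (B - μ • vecMulVec e e).mulVecLin := by
  have hene : e ≠ 0 := by
    intro h
    rw [h] at hee
    simp at hee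
  have h3 : e ⬝ᵥ e = 1 := by rw [dot_self_eq_sum_sq, hee]
  rw [SetLike.lt_iff_le_and_exists]
  refine ⟨?_, e, ?_, ?_⟩
  · intro x hx
    rw [LinearMap.mem_ker, Matrix.mulVecLin_apply] at hx ⊢
    have hex : e ⬝ᵥ x = 0 := by
      have h1 : μ * (e ⬝ᵥ x) = 0 := by
        have : (μ • e) ⬝ᵥ x = e ⬝ᵥ B.mulVec x := by
          rw [← he, ← symm_dot hB, symm_dot hB]
        rw [smul_dotProduct, smul_eq_mul] at this
        rw [this, symm_dot hB, ← symm_dot hB, hx, dotProduct_zero]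
      rcases mul_eq_zero.mp h1 with h | h
      · exact absurd h hμ
      · exact h
    rw [Matrix.sub_mulVec, hx, Matrix.smul_mulVec, vecMulVec_mulVec', hex]
    simp
  · rw [LinearMap.mem_ker, Matrix.mulVecLin_apply, Matrix.sub_mulVec, he,
      Matrix.smul_mulVec, vecMulVec_mulVec', h3]
    simp
  · rw [LinearMap.mem_ker, Matrix.mulVecLin_apply, he]
    exact smul_ne_zero hμ hene

lemma eq_zero_of_ker_top {B : Matrix (Fin n) (Fin n) ℝ}
    (h : LinearMap.ker B.mulVecLin = ⊤) : B = 0 := by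
  have h0 : B.mulVecLin = 0 := LinearMap.ker_eq_top.mp h
  ext i j
  have := congrFun (congrArg (fun f => f (Pi.single j 1)) (congrArg DFunLike.coe h0)) i
  simpa [Matrix.mulVecLin_apply, Matrix.mulVec_single] using this

/-- The set `K`. -/
def KSet (n : ℕ) (ρ χ : ℝ) : Set (Pt n) :=
  {p | p.2 = ρ⁻¹ • vecMulVec p.1 p.1
          - ((∑ i, p.1 i ^ 2) / (n * ρ)) • (1 : Matrix (Fin n) (Fin n) ℝ) ∧
       (∑ i, p.1 i ^ 2) = ρ * χ}

/-- The set `S`. -/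
noncomputable def SSet (n : ℕ) (ρ χ : ℝ) : Set (Pt n) :=
  {p | p.2.IsSymm ∧ p.2.trace = 0 ∧
       lambdaMax (ρ⁻¹ • vecMulVec p.1 p.1 - p.2) ≤ χ / n}

lemma one_apply_symm (i j : Fin n) :
    (1 : Matrix (Fin n) (Fin n) ℝ) j i = (1 : Matrix (Fin n) (Fin n) ℝ) i j := by
  rcases eq_or_ne i j with rfl | h
  · rfl
  · rw [Matrix.one_apply_ne h, Matrix.one_apply_ne (Ne.symm h)]

lemma mem_SSet_iff (hχ : 0 < χ) {p : Pt n} :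
    p ∈ SSet n ρ χ ↔ p.2.IsSymm ∧ p.2.trace = 0 ∧
      ∀ v : Fin n → ℝ, ρ⁻¹ * (p.1 ⬝ᵥ v) ^ 2 - v ⬝ᵥ p.2.mulVec v ≤ χ / n * ∑ i, v i ^ 2 := by
  have ht : (0:ℝ) ≤ χ / n := by positivity
  unfold SSet
  simp only [Set.mem_setOf_eq]
  refine and_congr_right fun _ => and_congr_right fun _ => ?_
  rw [show (ρ⁻¹ • vecMulVec p.1 p.1 - p.2) = Amat ρ p from rfl, lambdaMax_le_iff ht]
  exact forall_congr' fun v => by rw [quad_Amat]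

lemma Bmat_psd {p : Pt n}
    (hq : ∀ v : Fin n → ℝ, ρ⁻¹ * (p.1 ⬝ᵥ v) ^ 2 - v ⬝ᵥ p.2.mulVec v ≤ χ / n * ∑ i, v i ^ 2) :
    ∀ v, 0 ≤ v ⬝ᵥ (Bmat ρ χ p).mulVec v := by
  intro v
  rw [quad_Bmat]
  linarith [hq v]

lemma Bmat_isSymm {p : Pt n} (hU : p.2.IsSymm) : (Bmat ρ χ p).IsSymm := by
  apply Matrix.IsSymm.ext
  intro i j
  simp only [Bmat, Amat, Matrix.sub_apply, Matrix.smul_apply, vecMulVec_apply, smul_eq_mul,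
    one_apply_symm i j, hU.apply i j]
  ring

lemma trace_Bmat (hn : 0 < n) (p : Pt n) :
    (Bmat ρ χ p).trace = χ - (ρ⁻¹ * ∑ i, p.1 i ^ 2 - p.2.trace) := by
  have hncast : ((n:ℝ)) ≠ 0 := Nat.cast_ne_zero.mpr hn.ne'
  rw [Bmat, Matrix.trace_sub, trace_smul_one hn, trace_Amat]
  field_simp

lemma psd_trace_zero_eq_zero {B : Matrix (Fin n) (Fin n) ℝ} (hsym : B.IsSymm)
    (hpsd : ∀ v, 0 ≤ v ⬝ᵥ B.mulVec v) (htr : B.trace = 0) : B = 0 := by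
  have hdiag : ∀ i, 0 ≤ B i i := by
    intro i
    have h := hpsd (Pi.single i 1)
    rw [Matrix.mulVec_single, single_dotProduct] at h
    simpa using h
  have hzero : ∀ i, B i i = 0 := by
    intro i
    have hsum : ∑ j, B j j = 0 := by
      rw [← htr]; rfl
    exact (Finset.sum_eq_zero_iff_of_nonneg (fun j _ => hdiag j)).mp hsum i (Finset.mem_univ i)
  ext i j
  rcases eq_or_ne i j with rfl | hij
  · simpa using hzero i
  · have key : ∀ t : ℝ, 0 ≤ t * (B i j + B j i) := by
      intro t
      have h := hpsd (Pi.single i t + Pi.single j 1)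
      rw [Matrix.mulVec_add, Matrix.mulVec_single, Matrix.mulVec_single, add_dotProduct,
        dotProduct_add, dotProduct_add, single_dotProduct, single_dotProduct,
        single_dotProduct, single_dotProduct] at h
      simp only [Pi.smul_apply, MulOpposite.smul_eq_mul_unop, MulOpposite.unop_op, Matrix.col_apply,
        hzero i, hzero j] at h
      nlinarith [h]
    have h1 := key 1
    have h2 := key (-1)
    have hs := hsym.apply i j
    simp only [Matrix.zero_apply]
    nlinarith [h1, h2]

lemma memK_of_B_eq_zero (hn : 0 < n) (hρ : 0 < ρ) {p : Pt n} (htr : p.2.trace = 0)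
    (hB : Bmat ρ χ p = 0) : p ∈ KSet n ρ χ := by
  have hncast : ((n:ℝ)) ≠ 0 := Nat.cast_ne_zero.mpr hn.ne'
  have hU : p.2 = ρ⁻¹ • vecMulVec p.1 p.1 - (χ / n) • (1 : Matrix (Fin n) (Fin n) ℝ) := by
    ext i j
    have h := congrFun (congrFun hB i) j
    simp only [Bmat, Amat, Matrix.sub_apply, Matrix.smul_apply, vecMulVec_apply,
      Matrix.zero_apply, smul_eq_mul] at h ⊢
    linarith
  have hsum : (∑ i, p.1 i ^ 2) = ρ * χ := by
    have h2 := congrArg Matrix.trace hU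
    rw [htr, Matrix.trace_sub, Matrix.trace_smul, trace_vecMulVec, trace_smul_one hn,
      smul_eq_mul] at h2
    field_simp at h2
    nlinarith [h2]
  refine ⟨?_, hsum⟩
  rw [hU, hsum]
  have hsc : ρ * χ / ((n:ℝ) * ρ) = χ / n := by
    field_simp
  rw [hsc]

lemma memK_subset_S (hn : 0 < n) (hρ : 0 < ρ) (hχ : 0 < χ) :
    KSet n ρ χ ⊆ SSet n ρ χ := by
  have hncast : ((n:ℝ)) ≠ 0 := Nat.cast_ne_zero.mpr hn.ne'
  rintro ⟨m, U⟩ ⟨hU, hsum⟩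
  simp only at hU hsum
  rw [mem_SSet_iff ρ χ hχ]
  have hsc : (∑ i, m i ^ 2) / ((n:ℝ) * ρ) = χ / n := by
    rw [hsum]; field_simp
  refine ⟨?_, ?_, ?_⟩
  · apply Matrix.IsSymm.ext
    intro i j
    rw [hU]
    simp only [Matrix.sub_apply, Matrix.smul_apply, vecMulVec_apply, smul_eq_mul,
      one_apply_symm i j]
    ring
  · show U.trace = 0
    rw [hU, Matrix.trace_sub, Matrix.trace_smul, trace_vecMulVec, trace_smul_one hn,
      smul_eq_mul, hsc, hsum]
    field_simp
    ring
  · intro v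
    show ρ⁻¹ * (m ⬝ᵥ v) ^ 2 - v ⬝ᵥ U.mulVec v ≤ _
    rw [hU]
    rw [Matrix.sub_mulVec, dotProduct_sub, Matrix.smul_mulVec, dotProduct_smul,
      smul_eq_mul, quad_vecMulVec, quad_smul_one, hsc]
    linarith

lemma SSet_convex (hρ : 0 < ρ) (hχ : 0 < χ) : Convex ℝ (SSet n ρ χ) := by
  intro p hp q hq a b ha hb hab
  rw [mem_SSet_iff ρ χ hχ] at hp hq ⊢
  obtain ⟨hps, hpt, hpq⟩ := hp
  obtain ⟨hqs, hqt, hqq⟩ := hq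
  have hr2 : (a • p + b • q).2 = a • p.2 + b • q.2 := rfl
  have hr1 : (a • p + b • q).1 = a • p.1 + b • q.1 := rfl
  refine ⟨?_, ?_, ?_⟩
  · rw [hr2]
    apply Matrix.IsSymm.ext
    intro i j
    simp only [Matrix.add_apply, Matrix.smul_apply, smul_eq_mul, hps.apply i j, hqs.apply i j]
  · rw [hr2, Matrix.trace_add, Matrix.trace_smul, Matrix.trace_smul, hpt, hqt]
    simp
  · intro v
    rw [hr1, hr2]
    have hx : (a • p.1 + b • q.1) ⬝ᵥ v = a * (p.1 ⬝ᵥ v) + b * (q.1 ⬝ᵥ v) := by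
      rw [add_dotProduct, smul_dotProduct, smul_dotProduct, smul_eq_mul, smul_eq_mul]
    have hUq : v ⬝ᵥ (a • p.2 + b • q.2).mulVec v
        = a * (v ⬝ᵥ p.2.mulVec v) + b * (v ⬝ᵥ q.2.mulVec v) := by
      rw [Matrix.add_mulVec, dotProduct_add, Matrix.smul_mulVec,
        Matrix.smul_mulVec, dotProduct_smul, dotProduct_smul, smul_eq_mul, smul_eq_mul]
    rw [hx, hUq]
    have h1 := hpq v
    have h2 := hqq v
    have hb' : b = 1 - a := by linarith
    subst hb'
    have hinv : 0 ≤ ρ⁻¹ := by positivity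
    nlinarith [mul_nonneg (mul_nonneg ha hb) (mul_nonneg hinv
      (sq_nonneg ((p.1 ⬝ᵥ v) - (q.1 ⬝ᵥ v)))), h1, h2, ha, hb]

lemma trace_vecMulVec' (a b : Fin n → ℝ) : (vecMulVec a b).trace = a ⬝ᵥ b := by
  simp [Matrix.trace, Matrix.diag, vecMulVec_apply, dotProduct]

lemma Amat_shift (hρ : ρ ≠ 0) (m e : Fin n → ℝ) (U : Matrix (Fin n) (Fin n) ℝ) (s t μ : ℝ)
    (hs : s ^ 2 - ρ * t * s - ρ * μ = 0) :
    Amat ρ ((m + s • e, U + s • (ρ⁻¹ • (vecMulVec e m + vecMulVec m e) + t • vecMulVec e e)) : Pt n)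
      = Amat ρ ((m, U) : Pt n) + μ • vecMulVec e e := by
  ext i j
  simp only [Amat, Matrix.sub_apply, Matrix.add_apply, Matrix.smul_apply, vecMulVec_apply,
    Pi.add_apply, Pi.smul_apply, smul_eq_mul]
  field_simp
  linear_combination (e i * e j) * hs

lemma comb_eq (m e : Fin n → ℝ) (U C : Matrix (Fin n) (Fin n) ℝ) {a b s₁ s₂ : ℝ}
    (hab : a + b = 1) (habs : a * s₁ + b * s₂ = 0) :
    a • ((m + s₁ • e, U + s₁ • C) : Pt n) + b • ((m + s₂ • e, U + s₂ • C) : Pt n)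
      = ((m, U) : Pt n) := by
  have h1 : a • (m + s₁ • e) + b • (m + s₂ • e) = m := by
    funext i
    simp only [Pi.add_apply, Pi.smul_apply, smul_eq_mul]
    linear_combination (m i) * hab + (e i) * habs
  have h2 : a • (U + s₁ • C) + b • (U + s₂ • C) = U := by
    ext i j
    simp only [Matrix.add_apply, Matrix.smul_apply, smul_eq_mul]
    linear_combination (U i j) * hab + (C i j) * habs
  show (a • (m + s₁ • e) + b • (m + s₂ • e), a • (U + s₁ • C) + b • (U + s₂ • C))
      = ((m, U) : Pt n)
  rw [h1, h2]

lemma split_step (hn : 0 < n) (hρ : 0 < ρ) (hχ : 0 < χ) {m : Fin n → ℝ}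
    {U : Matrix (Fin n) (Fin n) ℝ} (hp : ((m, U) : Pt n) ∈ SSet n ρ χ)
    (hB0 : Bmat ρ χ ((m, U) : Pt n) ≠ 0) :
    ∃ (p₁ p₂ : Pt n) (a b : ℝ), 0 ≤ a ∧ 0 ≤ b ∧ a + b = 1 ∧
      a • p₁ + b • p₂ = ((m, U) : Pt n) ∧ p₁ ∈ SSet n ρ χ ∧ p₂ ∈ SSet n ρ χ ∧
      Module.finrank ℝ (LinearMap.ker (Bmat ρ χ ((m, U) : Pt n)).mulVecLin)
        < Module.finrank ℝ (LinearMap.ker (Bmat ρ χ p₁).mulVecLin) ∧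
      Module.finrank ℝ (LinearMap.ker (Bmat ρ χ ((m, U) : Pt n)).mulVecLin)
        < Module.finrank ℝ (LinearMap.ker (Bmat ρ χ p₂).mulVecLin) := by
  obtain ⟨hsym, htr, hq⟩ := (mem_SSet_iff ρ χ hχ).mp hp
  simp only at hsym htr hq
  have hBsym : (Bmat ρ χ ((m, U) : Pt n)).IsSymm := Bmat_isSymm ρ χ hsym
  have hBpsd : ∀ v, 0 ≤ v ⬝ᵥ (Bmat ρ χ ((m, U) : Pt n)).mulVec v := Bmat_psd ρ χ hq
  obtain ⟨e, μ, hμ, hee, he⟩ := exists_unit_eigen hBsym hBpsd hB0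
  set t : ℝ := -2 * (e ⬝ᵥ m) / ρ with hts
  set C : Matrix (Fin n) (Fin n) ℝ :=
    ρ⁻¹ • (vecMulVec e m + vecMulVec m e) + t • vecMulVec e e with hCs
  have hdisc : (0:ℝ) < ρ ^ 2 * t ^ 2 + 4 * ρ * μ := by
    nlinarith [sq_nonneg (ρ * t), mul_pos hρ hμ]
  set D : ℝ := Real.sqrt (ρ ^ 2 * t ^ 2 + 4 * ρ * μ) with hDs
  have hD2 : D ^ 2 = ρ ^ 2 * t ^ 2 + 4 * ρ * μ := Real.sq_sqrt hdisc.le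
  have hDpos : 0 < D := by rw [hDs]; exact Real.sqrt_pos.mpr hdisc
  have habs : |ρ * t| < D := by
    rw [← Real.sqrt_sq_eq_abs, hDs]
    apply Real.sqrt_lt_sqrt (sq_nonneg _)
    nlinarith [mul_pos hρ hμ]
  have habs' := abs_lt.mp habs
  set s₁ : ℝ := (ρ * t - D) / 2 with hs₁s
  set s₂ : ℝ := (ρ * t + D) / 2 with hs₂s
  have hs₁ : s₁ < 0 := by rw [hs₁s]; linarith [habs'.2]
  have hs₂ : 0 < s₂ := by rw [hs₂s]; linarith [habs'.1]
  have hroot₁ : s₁ ^ 2 - ρ * t * s₁ - ρ * μ = 0 := by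
    rw [hs₁s]; linear_combination hD2 / 4
  have hroot₂ : s₂ ^ 2 - ρ * t * s₂ - ρ * μ = 0 := by
    rw [hs₂s]; linear_combination hD2 / 4
  have hmem : ∀ s : ℝ, s ^ 2 - ρ * t * s - ρ * μ = 0 →
      ((m + s • e, U + s • C) : Pt n) ∈ SSet n ρ χ ∧
      Bmat ρ χ ((m + s • e, U + s • C) : Pt n)
        = Bmat ρ χ ((m, U) : Pt n) - μ • vecMulVec e e := by
    intro s hs
    have hAshift := Amat_shift ρ hρ.ne' m e U s t μ hs
    have hBshift : Bmat ρ χ ((m + s • e, U + s • C) : Pt n)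
        = Bmat ρ χ ((m, U) : Pt n) - μ • vecMulVec e e := by
      simp only [Bmat, hCs]
      rw [hAshift]
      ext i j
      simp only [Matrix.sub_apply, Matrix.add_apply, Matrix.smul_apply, vecMulVec_apply,
        smul_eq_mul]
      ring
    refine ⟨?_, hBshift⟩
    rw [mem_SSet_iff ρ χ hχ]
    have hee' : e ⬝ᵥ e = 1 := by rw [dot_self_eq_sum_sq, hee]
    refine ⟨?_, ?_, ?_⟩
    · apply Matrix.IsSymm.ext
      intro i j
      show (U + s • C) j i = (U + s • C) i j
      rw [hCs]
      simp only [Matrix.add_apply, Matrix.smul_apply, vecMulVec_apply, smul_eq_mul,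
        hsym.apply i j]
      ring
    · show (U + s • C).trace = 0
      rw [Matrix.trace_add, Matrix.trace_smul, hCs, Matrix.trace_add, Matrix.trace_smul,
        Matrix.trace_smul, Matrix.trace_add, trace_vecMulVec', trace_vecMulVec',
        trace_vecMulVec', dotProduct_comm m e, hee', htr, hts]
      simp only [smul_eq_mul]
      field_simp
      ring
    · intro v
      show ρ⁻¹ * ((m + s • e) ⬝ᵥ v) ^ 2 - v ⬝ᵥ (U + s • C).mulVec v ≤ χ / n * ∑ i, v i ^ 2
      have hqa := quad_Amat ρ ((m + s • e, U + s • C) : Pt n) v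
      simp only [Prod.fst, Prod.snd] at hqa
      rw [← hqa, hAshift, Matrix.add_mulVec, dotProduct_add, Matrix.smul_mulVec,
        dotProduct_smul, smul_eq_mul, quad_vecMulVec]
      have hlow := eigen_lower hBsym hBpsd hee he v
      rw [quad_Bmat] at hlow
      have hq' := quad_Amat ρ ((m, U) : Pt n) v
      simp only [Prod.fst, Prod.snd] at hq' hlow
      rw [hq']
      have hev : e ⬝ᵥ v = v ⬝ᵥ e := dotProduct_comm e v
      linarith
  obtain ⟨hmem₁, hBeq₁⟩ := hmem s₁ hroot₁
  obtain ⟨hmem₂, hBeq₂⟩ := hmem s₂ hroot₂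
  have hker := ker_lt hBsym hμ.ne' hee he
  have hfr : Module.finrank ℝ (LinearMap.ker (Bmat ρ χ ((m, U) : Pt n)).mulVecLin)
      < Module.finrank ℝ
        (LinearMap.ker (Bmat ρ χ ((m, U) : Pt n) - μ • vecMulVec e e).mulVecLin) :=
    Submodule.finrank_lt_finrank_of_lt hker
  have hd : 0 < s₂ - s₁ := by linarith
  refine ⟨(m + s₁ • e, U + s₁ • C), (m + s₂ • e, U + s₂ • C), s₂ / (s₂ - s₁),
    -s₁ / (s₂ - s₁), div_nonneg hs₂.le hd.le, div_nonneg (by linarith) hd.le, ?_, ?_,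
    hmem₁, hmem₂, ?_, ?_⟩
  · field_simp
    ring
  · apply comb_eq
    · field_simp
      ring
    · field_simp
      ring
  · rw [hBeq₁]; exact hfr
  · rw [hBeq₂]; exact hfr

lemma S_subset_hull (hn : 0 < n) (hρ : 0 < ρ) (hχ : 0 < χ) :
    SSet n ρ χ ⊆ convexHull ℝ (KSet n ρ χ) := by
  have H : ∀ (k : ℕ) (p : Pt n), p ∈ SSet n ρ χ →
      n - Module.finrank ℝ (LinearMap.ker (Bmat ρ χ p).mulVecLin) ≤ k →
      p ∈ convexHull ℝ (KSet n ρ χ) := by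
    intro k
    induction k with
    | zero =>
      intro p hp hk
      have hle : Module.finrank ℝ (LinearMap.ker (Bmat ρ χ p).mulVecLin) ≤ n := by
        simpa [Module.finrank_fin_fun] using
          Submodule.finrank_le (LinearMap.ker (Bmat ρ χ p).mulVecLin)
      have heq : Module.finrank ℝ (LinearMap.ker (Bmat ρ χ p).mulVecLin) = n := by omega
      have hker : LinearMap.ker (Bmat ρ χ p).mulVecLin = ⊤ :=
        Submodule.eq_top_of_finrank_eq (by rw [heq, Module.finrank_fin_fun])
      have hB0 : Bmat ρ χ p = 0 := eq_zero_of_ker_top hker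
      have htrp : p.2.trace = 0 := ((mem_SSet_iff ρ χ hχ).mp hp).2.1
      exact subset_convexHull ℝ _ (memK_of_B_eq_zero ρ χ hn hρ htrp hB0)
    | succ k ih =>
      intro p hp hk
      by_cases hB0 : Bmat ρ χ p = 0
      · have htrp : p.2.trace = 0 := ((mem_SSet_iff ρ χ hχ).mp hp).2.1
        exact subset_convexHull ℝ _ (memK_of_B_eq_zero ρ χ hn hρ htrp hB0)
      · obtain ⟨m, U⟩ := p
        obtain ⟨p₁, p₂, a, b, ha, hb, hab, hcomb, hm₁, hm₂, hf₁, hf₂⟩ :=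
          split_step ρ χ hn hρ hχ hp hB0
        have h₁ : p₁ ∈ convexHull ℝ (KSet n ρ χ) := ih p₁ hm₁ (by omega)
        have h₂ : p₂ ∈ convexHull ℝ (KSet n ρ χ) := ih p₂ hm₂ (by omega)
        have hc := (convex_convexHull ℝ (KSet n ρ χ)) h₁ h₂ ha hb hab
        rwa [hcomb] at hc
  exact fun p hp => H n p hp (Nat.sub_le _ _)

lemma memK_of_S_norm (hn : 0 < n) (hρ : 0 < ρ) (hχ : 0 < χ) {p : Pt n}
    (hp : p ∈ SSet n ρ χ) (hnorm : (∑ i, p.1 i ^ 2) = ρ * χ) : p ∈ KSet n ρ χ := by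
  obtain ⟨hsym, htrp, hq⟩ := (mem_SSet_iff ρ χ hχ).mp hp
  have hB0 : Bmat ρ χ p = 0 := by
    apply psd_trace_zero_eq_zero (Bmat_isSymm ρ χ hsym) (Bmat_psd ρ χ hq)
    rw [trace_Bmat ρ χ hn, hnorm, htrp]
    field_simp
    ring
  exact memK_of_B_eq_zero ρ χ hn hρ htrp hB0

end Main

end Stmt4Aux

theorem stmt_4 {n : ℕ} (hn : 0 < n) (ρ χ : ℝ) (hρ : 0 < ρ) (hχ : 0 < χ) :
    let K : Set ((Fin n → ℝ) × Matrix (Fin n) (Fin n) ℝ) :=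
      {p | p.2 = ρ⁻¹ • vecMulVec p.1 p.1
              - ((∑ i, p.1 i ^ 2) / (n * ρ)) • (1 : Matrix (Fin n) (Fin n) ℝ) ∧
           (∑ i, p.1 i ^ 2) = ρ * χ}
    let S : Set ((Fin n → ℝ) × Matrix (Fin n) (Fin n) ℝ) :=
      {p | p.2.IsSymm ∧ p.2.trace = 0 ∧
           lambdaMax (ρ⁻¹ • vecMulVec p.1 p.1 - p.2) ≤ χ / n}
    convexHull ℝ K = S ∧ K = S ∩ {p | (∑ i, p.1 i ^ 2) = ρ * χ} := by
  intro K S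
  have hK : K = Stmt4Aux.KSet n ρ χ := rfl
  have hS : S = Stmt4Aux.SSet n ρ χ := rfl
  rw [hK, hS]
  constructor
  · exact Set.Subset.antisymm
      (convexHull_min (Stmt4Aux.memK_subset_S ρ χ hn hρ hχ) (Stmt4Aux.SSet_convex ρ χ hρ hχ))
      (Stmt4Aux.S_subset_hull ρ χ hn hρ hχ)
  · apply Set.Subset.antisymm
    · intro p hp
      exact ⟨Stmt4Aux.memK_subset_S ρ χ hn hρ hχ hp, hp.2⟩
    · rintro p ⟨hpS, hpn⟩
      exact Stmt4Aux.memK_of_S_norm ρ χ hn hρ hχ hpS hpn
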